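/- The G₂ cluster recurrence is periodic with period 8: if a sequence (a_n) of nonzero field elements satisfies a_{n+1} a_{n-1} = 1 + a_n when n is odd and a_{n+1} a_{n-1} = 1 + a_n³ when n is even, then a_{n+8} = a_n for all n. -/

import Mathlib

theorem g2_aux1 {K : Type*} [Field K] (b0 b1 b2 b3 b4 b5 b6 b7 b8 : K)
    (h0 : b0 ≠ 0) (h1 : b1 ≠ 0) (h2 : b2 ≠ 0) (h3 : b3 ≠ 0)
    (h4 : b4 ≠ 0) (h5 : b5 ≠ 0) (h6 : b6 ≠ 0)
    (e1 : b2 * b0 = 1 + b1)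
    (e2 : b3 * b1 = 1 + b2 ^ 3)
    (e3 : b4 * b2 = 1 + b3)
    (e4 : b5 * b3 = 1 + b4 ^ 3)
    (e5 : b6 * b4 = 1 + b5)
    (e6 : b7 * b5 = 1 + b6 ^ 3)
    (e7 : b8 * b6 = 1 + b7) : b8 = b0 := by
  set x := b0
  set y := b1
  have hb2 : b2 = (1 + y) / x := eq_div_of_mul_eq h0 e1
  have hu : (1 : K) + y ≠ 0 := by
    intro h
    apply h2
    rw [hb2, h, zero_div]
  have hb3 : b3 = (x ^ 3 + (1 + y) ^ 3) / (x ^ 3 * y) := by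
    rw [eq_div_of_mul_eq h1 e2, hb2]
    field_simp
    try ring
  have hn3 : x ^ 3 + (1 + y) ^ 3 ≠ 0 := by
    intro h
    apply h3
    rw [hb3, h, zero_div]
  have hb4 : b4 = (x ^ 3 + (1 + y) ^ 2) / (x ^ 2 * y) := by
    rw [eq_div_of_mul_eq h2 e3, hb3, hb2]
    field_simp
    try ring
  have hn4 : x ^ 3 + (1 + y) ^ 2 ≠ 0 := by
    intro h
    apply h4
    rw [hb4, h, zero_div]
  have hb5 : b5 = (x ^ 6 + (2 + 3 * y) * x ^ 3 + (1 + y) ^ 3) / (x ^ 3 * y ^ 2) := by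
    rw [eq_div_of_mul_eq h3 e4, hb4, hb3]
    field_simp
    try ring
  have hn5 : x ^ 6 + (2 + 3 * y) * x ^ 3 + (1 + y) ^ 3 ≠ 0 := by
    intro h
    apply h5
    rw [hb5, h, zero_div]
  have hb6 : b6 = (x ^ 3 + 1 + y) / (x * y) := by
    rw [eq_div_of_mul_eq h4 e5, hb5, hb4]
    field_simp
    try ring
  have hn6 : x ^ 3 + 1 + y ≠ 0 := by
    intro h
    apply h6
    rw [hb6, h, zero_div]
  have hb7 : b7 = (x ^ 3 + 1) / y := by
    rw [eq_div_of_mul_eq h5 e6, hb6, hb5]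
    rw [div_eq_div_iff (div_ne_zero hn5 (by positivity)) h1]
    field_simp
    try ring
  rw [eq_div_of_mul_eq h6 e7, hb7, hb6]
  field_simp
  try ring

/-- The G₂ cluster exchange relations are periodic with period 8. -/
theorem g2_cluster_period_eight {K : Type*} [Field K] (a : ℤ → K)
    (hne : ∀ n, a n ≠ 0)
    (hodd : ∀ n : ℤ, Odd n → a (n + 1) * a (n - 1) = 1 + a n)
    (heven : ∀ n : ℤ, Even n → a (n + 1) * a (n - 1) = 1 + (a n) ^ 3) :
    ∀ n : ℤ, a (n + 8) = a n := by
  have key : ∀ n : ℤ, Even n → a (n + 8) = a n := by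
    intro n hn
    obtain ⟨k, hk⟩ := hn
    have e1 := hodd (n + 1) ⟨k, by omega⟩
    have e2 := heven (n + 2) ⟨k + 1, by omega⟩
    have e3 := hodd (n + 3) ⟨k + 1, by omega⟩
    have e4 := heven (n + 4) ⟨k + 2, by omega⟩
    have e5 := hodd (n + 5) ⟨k + 2, by omega⟩
    have e6 := heven (n + 6) ⟨k + 3, by omega⟩
    have e7 := hodd (n + 7) ⟨k + 3, by omega⟩
    rw [show n + 1 + 1 = n + 2 by ring, show n + 1 - 1 = n by ring] at e1
    rw [show n + 2 + 1 = n + 3 by ring, show n + 2 - 1 = n + 1 by ring] at e2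
    rw [show n + 3 + 1 = n + 4 by ring, show n + 3 - 1 = n + 2 by ring] at e3
    rw [show n + 4 + 1 = n + 5 by ring, show n + 4 - 1 = n + 3 by ring] at e4
    rw [show n + 5 + 1 = n + 6 by ring, show n + 5 - 1 = n + 4 by ring] at e5
    rw [show n + 6 + 1 = n + 7 by ring, show n + 6 - 1 = n + 5 by ring] at e6
    rw [show n + 7 + 1 = n + 8 by ring, show n + 7 - 1 = n + 6 by ring] at e7
    exact g2_aux1 (a n) (a (n + 1)) (a (n + 2)) (a (n + 3)) (a (n + 4)) (a (n + 5))
      (a (n + 6)) (a (n + 7)) (a (n + 8)) (hne n) (hne (n + 1)) (hne (n + 2)) (hne (n + 3))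
      (hne (n + 4)) (hne (n + 5)) (hne (n + 6)) e1 e2 e3 e4 e5 e6 e7
  intro n
  rcases Int.even_or_odd n with hn | hn
  · exact key n hn
  · -- n odd: use relations at n and n + 8 together with periodicity at n ± 1.
    obtain ⟨k, hk⟩ := hn
    have h1 : a (n + 9) = a (n + 1) := by
      have := key (n + 1) ⟨k + 1, by omega⟩
      rwa [show n + 1 + 8 = n + 9 by ring] at this
    have h2 : a (n + 7) = a (n - 1) := by
      have := key (n - 1) ⟨k, by omega⟩
      rwa [show n - 1 + 8 = n + 7 by ring] at this
    have eA := hodd n ⟨k, hk⟩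
    have eB := hodd (n + 8) ⟨k + 4, by omega⟩
    rw [show n + 8 + 1 = n + 9 by ring, show n + 8 - 1 = n + 7 by ring, h1, h2, eA] at eB
    have := hne (n + 8)
    -- eB : 1 + a n = 1 + a (n + 8)
    have : a n = a (n + 8) := add_left_cancel eB
    exact this.symm
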